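/- Let Ω, Ω_ν > 0, κ_ν > 0, g ≠ 0, M ≥ 1, and let f_{μ,k} = ±1 satisfy ∑_k f_{μ,k} f_{ν,k} = 2^{M−1} δ_{μν}. Suppose for fixed ν and some |z| ∈ (0,1] we set y_k = 0, z_k = f_{ν,k}|z|, x_k = −√(1−|z|²) for all k, α_μ = 2^{M−1} g |z| δ_{μν} (−Ω_μ − iκ_μ/2)/(Ω_μ² + (κ_μ/2)²). Then (x_k, y_k, z_k, α_μ) is a stationary point of the mean-field equations ẋ_k = −2g∑_μ f_{μ,k}(α_μ*+α_μ) y_k, ẏ_k = −2Ω z_k + 2g∑_μ f_{μ,k}(α_μ*+α_μ) x_k, ż_k = 2Ω y_k, α̇_μ = −(iΩ_μ + κ_μ/2)α_μ − ig ∑_k f_{μ,k} z_k, if and only if |z|² = 1 − (1/(4g₀⁴))(Ω/Ω_ν)²(Ω_ν² + (κ_ν/2)²)², where g₀ = g√(2^{M−1}). -/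

import Mathlib

/-- The pattern-aligned ansatz is a stationary point of the mean-field equations
iff the overlap satisfies the self-consistency relation. -/
theorem stmt_13 (M : ℕ) (hM : 1 ≤ M) (Ω g r : ℝ) (hΩ : 0 < Ω) (hg : g ≠ 0)
    (Ωb κb : Fin M → ℝ) (hΩb : ∀ μ, 0 < Ωb μ) (hκb : ∀ μ, 0 < κb μ)
    (f : Fin M → Fin (2 ^ (M - 1)) → ℝ)
    (hfpm : ∀ μ k, f μ k = 1 ∨ f μ k = -1)
    (horth : ∀ μ ν' : Fin M,
      ∑ k, f μ k * f ν' k = if μ = ν' then (2:ℝ) ^ (M - 1) else 0)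
    (ν : Fin M) (hr0 : 0 < r) (hr1 : r ≤ 1)
    (x y z : Fin (2 ^ (M - 1)) → ℝ) (α : Fin M → ℂ)
    (hy : ∀ k, y k = 0)
    (hz : ∀ k, z k = f ν k * r)
    (hx : ∀ k, x k = -Real.sqrt (1 - r ^ 2))
    (hα : ∀ μ, α μ = (2:ℂ) ^ (M - 1) * (g:ℂ) * (r:ℂ) * (if μ = ν then 1 else 0) *
        (-(Ωb μ : ℂ) - Complex.I * (κb μ : ℂ) / 2) /
        ((Ωb μ : ℂ) ^ 2 + ((κb μ : ℂ) / 2) ^ 2)) :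
    ((∀ k, -2 * g * (∑ μ, f μ k * (α μ + (starRingEnd ℂ) (α μ)).re) * y k = 0) ∧
     (∀ k, -2 * Ω * z k + 2 * g * (∑ μ, f μ k * (α μ + (starRingEnd ℂ) (α μ)).re) * x k = 0) ∧
     (∀ k, 2 * Ω * y k = 0) ∧
     (∀ μ, -(Complex.I * (Ωb μ : ℂ) + (κb μ : ℂ) / 2) * α μ -
        Complex.I * (g:ℂ) * ((∑ k, f μ k * z k : ℝ) : ℂ) = 0))
    ↔ r ^ 2 = 1 - (1 / (4 * (g * Real.sqrt ((2:ℝ) ^ (M - 1))) ^ 4)) *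
        (Ω / Ωb ν) ^ 2 * ((Ωb ν) ^ 2 + (κb ν / 2) ^ 2) ^ 2 := by
  set a : ℝ := (2:ℝ) ^ (M - 1) with ha
  have ha0 : (0:ℝ) < a := by positivity
  set D : ℝ := Ωb ν ^ 2 + (κb ν / 2) ^ 2 with hDdef
  have hD0 : (0:ℝ) < D := by
    have := hΩb ν; positivity
  have hg2 : (0:ℝ) < g ^ 2 := by positivity
  have hΩbν := hΩb ν
  set c : ℝ := Ω * D / (2 * a * g ^ 2 * Ωb ν) with hc
  have hc0 : 0 ≤ c := by positivity
  -- α vanishes off ν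
  have hα0 : ∀ μ, μ ≠ ν → α μ = 0 := by
    intro μ h
    simp [hα, h]
  -- explicit form of α ν
  have hDC : ((Ωb ν : ℂ)) ^ 2 + ((κb ν : ℂ) / 2) ^ 2 = ((D : ℝ) : ℂ) := by
    push_cast [hDdef]; ring
  have hDCne : ((D : ℝ) : ℂ) ≠ 0 := by
    exact_mod_cast hD0.ne'
  have haC : ((2:ℂ)) ^ (M - 1) = ((a : ℝ) : ℂ) := by push_cast [ha]; norm_num
  have hαν : α ν = ((a * g * r * (-Ωb ν) / D : ℝ) : ℂ) +
      ((a * g * r * (-(κb ν) / 2) / D : ℝ) : ℂ) * Complex.I := by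
    rw [hα, if_pos rfl, hDC, haC]
    field_simp
    push_cast
    field_simp
    ring
  have hRe : (α ν + (starRingEnd ℂ) (α ν)).re = 2 * (a * g * r * (-Ωb ν) / D) := by
    rw [Complex.add_conj, hαν]
    simp
  set E : ℝ := 2 * (a * g * r * (-Ωb ν) / D) with hE
  have hS : ∀ k, (∑ μ, f μ k * (α μ + (starRingEnd ℂ) (α μ)).re) = f ν k * E := by
    intro k
    rw [Finset.sum_eq_single ν]
    · rw [hRe]
    · intro μ _ hμ
      simp [hα0 μ hμ]
    · simp
  -- the z-sum
  have hzsum : ∀ μ, (∑ k, f μ k * z k) = (if μ = ν then a else 0) * r := by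
    intro μ
    simp only [hz, ← mul_assoc]
    rw [← Finset.sum_mul, horth]
  -- equation 4 always holds
  have heq4 : ∀ μ, -(Complex.I * (Ωb μ : ℂ) + (κb μ : ℂ) / 2) * α μ -
      Complex.I * (g:ℂ) * ((∑ k, f μ k * z k : ℝ) : ℂ) = 0 := by
    intro μ
    by_cases hμ : μ = ν
    · subst hμ
      rw [hzsum, if_pos rfl, hα, if_pos rfl, hDC, haC]
      field_simp
      push_cast
      ring_nf
      simp [Complex.I_sq]
      rw [hDdef]; push_cast
      ring
    · rw [hα0 μ hμ, hzsum, if_neg hμ]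
      simp
  -- scalar equivalence for equation 2
  have key : ∀ k, (-2 * Ω * z k + 2 * g * (∑ μ, f μ k * (α μ + (starRingEnd ℂ) (α μ)).re)
      * x k = 0) ↔ Real.sqrt (1 - r ^ 2) = c := by
    intro k
    rw [hS, hz, hx, hE]
    set s := Real.sqrt (1 - r ^ 2) with hs
    have hfk2 : f ν k * f ν k = 1 := by
      rcases hfpm ν k with h | h <;> rw [h] <;> norm_num
    have hfactor : -2 * Ω * (f ν k * r) + 2 * g * (f ν k * (2 * (a * g * r * (-Ωb ν) / D)))
        * (-s) = (f ν k * r) * ((4 * a * g ^ 2 * Ωb ν / D) * s - 2 * Ω) := by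
      field_simp
      ring
    rw [hfactor, mul_eq_zero]
    have hfr : f ν k * r ≠ 0 := by
      rcases hfpm ν k with h | h <;> rw [h] <;> simpa using hr0.ne'
    have hK : (4 * a * g ^ 2 * Ωb ν / D) ≠ 0 := by positivity
    constructor
    · rintro (h | h)
      · exact absurd h hfr
      · rw [sub_eq_zero] at h
        rw [hc]
        field_simp at h ⊢
        linarith
    · intro h
      right
      rw [sub_eq_zero, h, hc]
      field_simp
      ring
  -- arithmetic identity for rhs constant
  have hconst : 1 - (1 / (4 * (g * Real.sqrt ((2:ℝ) ^ (M - 1))) ^ 4)) *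
      (Ω / Ωb ν) ^ 2 * ((Ωb ν) ^ 2 + (κb ν / 2) ^ 2) ^ 2 = 1 - c ^ 2 := by
    have hsq : (Real.sqrt ((2:ℝ) ^ (M - 1))) ^ 4 = a ^ 2 := by
      have : (Real.sqrt a) ^ 4 = ((Real.sqrt a) ^ 2) ^ 2 := by ring
      rw [← ha, this, Real.sq_sqrt ha0.le]
    rw [mul_pow, hsq, hc, ← hDdef]
    field_simp
    ring
  rw [hconst]
  constructor
  · rintro ⟨_, h2, _, _⟩
    have k0 : Fin (2 ^ (M - 1)) := ⟨0, pow_pos (by norm_num) _⟩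
    have hsc := (key k0).mp (h2 k0)
    have h1r : 0 ≤ 1 - r ^ 2 := by nlinarith
    have := Real.sq_sqrt h1r
    rw [hsc] at this
    linarith
  · intro h
    have hsc : Real.sqrt (1 - r ^ 2) = c := by
      have : 1 - r ^ 2 = c ^ 2 := by linarith
      rw [this, Real.sqrt_sq hc0]
    refine ⟨fun k => by simp [hy], fun k => (key k).mpr hsc, fun k => by simp [hy], heq4⟩
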